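/- Let G be a finite simple graph on vertex set V with n = |V|, let c : V → ℝ with c_v ≠ 0 for every v, suppose ∑_{v∈S} c_v ≤ 1 for every stable set S of G, and suppose there exist n maximal stable sets of G whose incidence vectors are linearly independent and each of which satisfies ∑_{v∈S} c_v = 1 (i.e., c^T x ≤ 1 is a full facet of STAB(G)). Let v ∈ V be a vertex of degree 2 whose two neighbors a and b are nonadjacent. Then c_v ≤ c_a and c_v ≤ c_b. -/

import Mathlib

def IsStable {V : Type*} (G : SimpleGraph V) (S : Finset V) : Prop :=
  ∀ u ∈ S, ∀ w ∈ S, ¬ G.Adj u w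

def MaxStable {V : Type*} (G : SimpleGraph V) (S : Finset V) : Prop :=
  IsStable G S ∧ ∀ T : Finset V, IsStable G T → S ⊆ T → S = T

noncomputable def incVec {V : Type*} (S : Finset V) : V → ℝ :=
  Set.indicator (↑S) 1

def FacetInducing {V : Type*} (G : SimpleGraph V) : Prop :=
  ∃ c : V → ℝ,
    (∀ v, c v ≠ 0) ∧
    (∀ S : Finset V, IsStable G S → ∑ v ∈ S, c v ≤ 1) ∧
    ∃ S : Fin (Nat.card V) → Finset V,
      (∀ j, MaxStable G (S j)) ∧
      LinearIndependent ℝ (fun j => incVec (S j)) ∧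
      ∀ j, ∑ v ∈ S j, c v = 1


lemma incVec_apply {V : Type*} (S : Finset V) (u : V) [Decidable (u ∈ S)] :
    incVec S u = if u ∈ S then 1 else 0 := by
  by_cases h : u ∈ S <;> simp [incVec, h]

lemma sum_mul_incVec {V : Type*} [Fintype V] (c : V → ℝ) (S : Finset V) :
    ∑ u, c u * incVec S u = ∑ u ∈ S, c u := by
  classical
  rw [Finset.sum_congr rfl (fun u _ => by rw [incVec_apply, mul_ite, mul_one, mul_zero])]
  rw [Finset.sum_ite_mem, Finset.univ_inter]

lemma key {V : Type*} [Fintype V] (G : SimpleGraph V) (c : V → ℝ)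
    (hc : ∀ u, c u ≠ 0)
    (hvalid : ∀ S : Finset V, IsStable G S → ∑ u ∈ S, c u ≤ 1)
    (S : Fin (Fintype.card V) → Finset V)
    (hmax : ∀ j, MaxStable G (S j))
    (hind : LinearIndependent ℝ (fun j => incVec (S j)))
    (hone : ∀ j, ∑ u ∈ S j, c u = 1)
    (v x y : V) (hxy : x ≠ y) (hnb : G.neighborSet v = {x, y}) :
    c v ≤ c x := by
  classical
  have hvx : G.Adj v x := by
    have : x ∈ G.neighborSet v := by rw [hnb]; simp
    exact this
  have hvy : G.Adj v y := by
    have : y ∈ G.neighborSet v := by rw [hnb]; simp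
    exact this
  -- Step 1: exists j with x ∈ S j and y ∉ S j
  haveI : Nonempty (Fin (Fintype.card V)) := ⟨⟨0, Fintype.card_pos_iff.2 ⟨v⟩⟩⟩
  have hex : ∃ j, x ∈ S j ∧ y ∉ S j := by
    by_contra h
    push_neg at h
    have hcard : Fintype.card (Fin (Fintype.card V)) = Module.finrank ℝ (V → ℝ) := by
      simp [Module.finrank_fintype_fun_eq_card]
    let B := basisOfLinearIndependentOfCardEqFinrank hind hcard
    let f : (V → ℝ) →ₗ[ℝ] ℝ :=
      { toFun := fun z => ∑ u, c u * z u
        map_add' := fun z w => by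
          simp [mul_add, Finset.sum_add_distrib]
        map_smul' := fun r z => by
          simp [Finset.mul_sum, mul_comm, mul_assoc, mul_left_comm] }
    let g : (V → ℝ) →ₗ[ℝ] ℝ := (LinearMap.proj v : (V → ℝ) →ₗ[ℝ] ℝ) + (LinearMap.proj y : (V → ℝ) →ₗ[ℝ] ℝ)
    have hfg : f = g := by
      apply B.ext
      intro j
      have hBj : B j = incVec (S j) := by
        have := coe_basisOfLinearIndependentOfCardEqFinrank hind hcard
        exact congrFun this j
      rw [hBj]
      have hf : f (incVec (S j)) = 1 := by
        show ∑ u, c u * incVec (S j) u = 1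
        rw [sum_mul_incVec, hone]
      have hg : g (incVec (S j)) = 1 := by
        show incVec (S j) v + incVec (S j) y = 1
        by_cases hv : v ∈ S j
        · have hy : y ∉ S j := fun hy => (hmax j).1 v hv y hy hvy
          rw [incVec_apply, incVec_apply, if_pos hv, if_neg hy]; ring
        · have hy : y ∈ S j := by
            -- maximality: v has a neighbor in S j
            have : ∃ u ∈ S j, G.Adj v u := by
              by_contra hno
              push_neg at hno
              have hst : IsStable G (insert v (S j)) := by
                intro p hp q hq hadj
                rw [Finset.mem_insert] at hp hq
                rcases hp with rfl | hp
                · rcases hq with rfl | hq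
                  · exact G.irrefl hadj
                  · exact hno q hq hadj
                · rcases hq with rfl | hq
                  · exact hno p hp hadj.symm
                  · exact (hmax j).1 p hp q hq hadj
              have := (hmax j).2 _ hst (Finset.subset_insert _ _)
              exact hv (this ▸ Finset.mem_insert_self v (S j))
            obtain ⟨u, hu, hadj⟩ := this
            have : u ∈ ({x, y} : Set V) := hnb ▸ hadj
            rcases this with rfl | rfl
            · exact h j hu
            · exact hu
          rw [incVec_apply, incVec_apply, if_neg hv, if_pos hy]; ring
      rw [hf, hg]
    have hcx : c x = 0 := by
      have h1 := LinearMap.congr_fun hfg ((Pi.single x 1 : V → ℝ))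
      have hfx : ∑ u, c u * (Pi.single x 1 : V → ℝ) u = c x := by
        rw [Finset.sum_eq_single x]
        · simp
        · intro u _ hu; simp [Pi.single_apply, hu]
        · intro h; exact absurd (Finset.mem_univ x) h
      have hgx : (Pi.single x 1 : V → ℝ) v + (Pi.single x 1 : V → ℝ) y = 0 := by
        rw [Pi.single_apply, Pi.single_apply, if_neg hvx.ne, if_neg (Ne.symm hxy)]
        ring
      simp only [f, g, LinearMap.coe_mk, AddHom.coe_mk, LinearMap.add_apply,
        LinearMap.proj_apply] at h1
      rw [hfx, hgx] at h1
      exact h1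
    exact hc x hcx
  obtain ⟨j, hx, hy⟩ := hex
  have hv : v ∉ S j := fun hv => (hmax j).1 v hv x hx hvx
  have hstT' : IsStable G (insert v ((S j).erase x)) := by
    intro p hp q hq hadj
    rw [Finset.mem_insert, Finset.mem_erase] at hp hq
    have hmem : ∀ w, G.Adj v w → w = x ∨ w = y := by
      intro w hw
      have : w ∈ ({x, y} : Set V) := hnb ▸ hw
      simpa using this
    rcases hp with rfl | ⟨hpx, hpS⟩
    · rcases hq with rfl | ⟨hqx, hqS⟩
      · exact G.irrefl hadj
      · rcases hmem q hadj with rfl | rfl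
        · exact hqx rfl
        · exact hy hqS
    · rcases hq with rfl | ⟨hqx, hqS⟩
      · rcases hmem p hadj.symm with rfl | rfl
        · exact hpx rfl
        · exact hy hpS
      · exact (hmax j).1 p hpS q hqS hadj
  have hsum : ∑ u ∈ insert v ((S j).erase x), c u = c v + (1 - c x) := by
    rw [Finset.sum_insert (fun h => hv (Finset.mem_erase.1 h).2)]
    have := Finset.sum_erase_add (S j) c hx
    have h2 : ∑ u ∈ (S j).erase x, c u = 1 - c x := by
      have h3 := hone j
      linarith [this]
    rw [h2]
  have := hvalid _ hstT'
  rw [hsum] at this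
  linarith

theorem stmt7 {V : Type*} [Fintype V] (G : SimpleGraph V) (c : V → ℝ)
    (hc : ∀ u, c u ≠ 0)
    (hvalid : ∀ S : Finset V, IsStable G S → ∑ u ∈ S, c u ≤ 1)
    (S : Fin (Fintype.card V) → Finset V)
    (hmax : ∀ j, MaxStable G (S j))
    (hind : LinearIndependent ℝ (fun j => incVec (S j)))
    (hone : ∀ j, ∑ u ∈ S j, c u = 1)
    (v a b : V) (hab : a ≠ b) (hnb : G.neighborSet v = {a, b})
    (hnadj : ¬ G.Adj a b) :
    c v ≤ c a ∧ c v ≤ c b := by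
  refine ⟨key G c hc hvalid S hmax hind hone v a b hab hnb, ?_⟩
  exact key G c hc hvalid S hmax hind hone v b a hab.symm (by rw [hnb, Set.pair_comm])
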